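/- Let S be an inverse semigroup and let R be a system over S that is coherent and s-unital epsilon-strong. If R_0 is a maximal commutative subring of R, then R is a simple ring if and only if R is system simple. -/

import Mathlib

open Pointwise

namespace PaperSys

variable {S R : Type*} [Semigroup S] [NonUnitalRing R]

/-- The additive subgroup of finite sums of products `a * b` with `a ∈ A`, `b ∈ B`. -/
def sumProd (A B : AddSubgroup R) : AddSubgroup R :=
  AddSubgroup.closure ((A : Set R) * (B : Set R))

/-- `𝓡` is a system over the semigroup `S` on the ring `R`:
`R = Σ_{s ∈ S} R_s` and `R_s R_t ⊆ R_{st}`. -/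
def IsSystem (𝓡 : S → AddSubgroup R) : Prop :=
  (⨆ s : S, 𝓡 s) = (⊤ : AddSubgroup R) ∧
    ∀ s t : S, ∀ x ∈ 𝓡 s, ∀ y ∈ 𝓡 t, x * y ∈ 𝓡 (s * t)

/-- `R₀ = Σ_{e ∈ E(S)} R_e`. -/
def sysZero (𝓡 : S → AddSubgroup R) : AddSubgroup R :=
  ⨆ e ∈ {e : S | e * e = e}, 𝓡 e

/-- `I` is a two-sided ideal of the (possibly non-unital) ring `R`. -/
def IsRingIdeal (I : AddSubgroup R) : Prop :=
  ∀ r : R, ∀ x ∈ I, r * x ∈ I ∧ x * r ∈ I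

/-- `I` is a system ideal: an ideal with `I = Σ_{s ∈ S} (I ∩ R_s)`. -/
def IsSystemIdeal (𝓡 : S → AddSubgroup R) (I : AddSubgroup R) : Prop :=
  IsRingIdeal I ∧ I = ⨆ s : S, (I ⊓ 𝓡 s)

/-- `R` is system simple: `{0}` and `R` are the only system ideals. -/
def SystemSimple (𝓡 : S → AddSubgroup R) : Prop :=
  ∀ I : AddSubgroup R, IsSystemIdeal 𝓡 I → I = ⊥ ∨ I = ⊤

/-- `R` is a simple ring: `{0}` and `R` are the only two-sided ideals. -/
def RingSimple (R' : Type*) [NonUnitalRing R'] : Prop :=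
  ∀ I : AddSubgroup R', IsRingIdeal I → I = ⊥ ∨ I = ⊤

/-- `Z(R₀)` as a subset of `R`. -/
def centerZero (𝓡 : S → AddSubgroup R) : Set R :=
  {z : R | z ∈ sysZero 𝓡 ∧ ∀ y ∈ sysZero 𝓡, z * y = y * z}

/-- `C_R(Z(R₀))` as a subset of `R`. -/
def centCenterZero (𝓡 : S → AddSubgroup R) : Set R :=
  {x : R | ∀ z ∈ centerZero 𝓡, x * z = z * x}

/-- The system is idempotent coherent: `R₀ R_s ⊆ R_s` and `R_s R₀ ⊆ R_s`. -/
def IdemCoherent (𝓡 : S → AddSubgroup R) : Prop :=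
  ∀ s : S, (∀ x ∈ sysZero 𝓡, ∀ y ∈ 𝓡 s, x * y ∈ 𝓡 s) ∧
    (∀ x ∈ sysZero 𝓡, ∀ y ∈ 𝓡 s, y * x ∈ 𝓡 s)

/-- The system is left non-degenerate. -/
def LeftNonDeg (𝓡 : S → AddSubgroup R) : Prop :=
  ∀ e : S, e * e = e → ∀ r ∈ 𝓡 e, r ≠ 0 →
    ∃ t : S, (t * e) * (t * e) = t * e ∧ ∃ x ∈ 𝓡 t, x * r ≠ 0

/-- The system is right non-degenerate. -/
def RightNonDeg (𝓡 : S → AddSubgroup R) : Prop :=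
  ∀ e : S, e * e = e → ∀ r ∈ 𝓡 e, r ≠ 0 →
    ∃ t : S, (e * t) * (e * t) = e * t ∧ ∃ x ∈ 𝓡 t, r * x ≠ 0

/-- `star` makes the semigroup `S` an inverse semigroup: `s (s*) s = s`,
`(s*) s (s*) = s*`, and `s*` is the unique such element. -/
def IsInverseStar (star : S → S) : Prop :=
  (∀ s : S, s * star s * s = s) ∧ (∀ s : S, star s * s * star s = star s) ∧
    ∀ s t : S, s * t * s = s → t * s * t = t → t = star s

/-- Coherent: `s ≤ t` (i.e. `s = t s* s`) implies `R_s ⊆ R_t`. -/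
def Coherent (star : S → S) (𝓡 : S → AddSubgroup R) : Prop :=
  ∀ s t : S, s = t * star s * s → 𝓡 s ≤ 𝓡 t

/-- Left s-unital epsilon-strong. -/
def LeftSEps (star : S → S) (𝓡 : S → AddSubgroup R) : Prop :=
  ∀ s : S, ∀ r ∈ 𝓡 s, ∃ ε ∈ sumProd (𝓡 s) (𝓡 (star s)), ε * r = r

/-- Right s-unital epsilon-strong. -/
def RightSEps (star : S → S) (𝓡 : S → AddSubgroup R) : Prop :=
  ∀ s : S, ∀ r ∈ 𝓡 s, ∃ ε ∈ sumProd (𝓡 (star s)) (𝓡 s), r * ε = r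

/-- Symmetric: `R_s R_{s*} R_s = R_s` for all `s`. -/
def IsSymmetricSys (star : S → S) (𝓡 : S → AddSubgroup R) : Prop :=
  ∀ s : S, sumProd (sumProd (𝓡 s) (𝓡 (star s))) (𝓡 s) = 𝓡 s

/-- The ring extension `R / C_R(Z(R₀))` has the ideal intersection property. -/
def IIPCentCenterZero (𝓡 : S → AddSubgroup R) : Prop :=
  ∀ I : AddSubgroup R, IsRingIdeal I → I ≠ ⊥ →
    ∃ x : R, x ≠ 0 ∧ x ∈ I ∧ x ∈ centCenterZero 𝓡

/-- `R₀` is a maximal commutative subring of `R`: `C_R(R₀) = R₀`. -/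
def MaxCommZero (𝓡 : S → AddSubgroup R) : Prop :=
  {x : R | ∀ y ∈ sysZero 𝓡, x * y = y * x} = (sysZero 𝓡 : Set R)



section AuxSG
variable {star : S → S} (h : IsInverseStar star)

section
include h

lemma star_star (s : S) : star (star s) = s :=
  (h.2.2 (star s) s (h.2.1 s) (h.1 s)).symm

lemma idem_star {e : S} (he : e * e = e) : star e = e := by
  have : e * e * e = e := by rw [he, he]
  exact (h.2.2 e e this this).symm

lemma idem_mul {e f : S} (he : e * e = e) (hf : f * f = f) :
    (e * f) * (e * f) = e * f := by
  set u := star (e * f) with hu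
  have h1 : (e * f) * u * (e * f) = e * f := h.1 (e * f)
  have h2 : u * (e * f) * u = u := h.2.1 (e * f)
  have key : f * u * e = u := by
    refine h.2.2 (e * f) (f * u * e) ?_ ?_
    · have heq : e * f * (f * u * e) * (e * f) = (e * f) * u * (e * f) := by
        simp only [mul_assoc]
        rw [← mul_assoc f f, hf, ← mul_assoc e e, he]
      rw [heq, h1]
    · have heq : f * u * e * (e * f) * (f * u * e) = f * (u * (e * f) * u) * e := by
        simp only [mul_assoc]
        rw [← mul_assoc e e, he, ← mul_assoc f f, hf]
      rw [heq, h2]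
  have huu : u * u = u := by
    conv_lhs => rw [← key]
    calc f * u * e * (f * u * e) = f * (u * (e * f) * u) * e := by
          simp only [mul_assoc]
      _ = f * u * e := by rw [h2]
      _ = u := key
  have hs : star u = u := idem_star h huu
  have : star u = e * f := by rw [hu, star_star h]
  rw [← this, hs, huu]

lemma idem_comm {e f : S} (he : e * e = e) (hf : f * f = f) :
    e * f = f * e := by
  have hef : (e * f) * (e * f) = e * f := idem_mul h he hf
  have hfe : (f * e) * (f * e) = f * e := idem_mul h hf he
  have : f * e = star (e * f) := by
    refine h.2.2 (e * f) (f * e) ?_ ?_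
    · calc e * f * (f * e) * (e * f) = e * (f * f) * (e * (e * f)) := by
            simp only [mul_assoc]
        _ = e * f * (e * (e * f)) := by rw [hf]
        _ = (e * f) * (e * f) := by rw [← mul_assoc e e, he]
        _ = e * f := hef
    · calc f * e * (e * f) * (f * e) = f * (e * e) * (f * (f * e)) := by
            simp only [mul_assoc]
        _ = f * e * (f * (f * e)) := by rw [he]
        _ = (f * e) * (f * e) := by rw [← mul_assoc f f, hf]
        _ = f * e := hfe
  rw [this, idem_star h hef]

lemma mul_star_idem (s : S) : (s * star s) * (s * star s) = s * star s := by
  calc s * star s * (s * star s) = (s * star s * s) * star s := by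
        simp only [mul_assoc]
    _ = s * star s := by rw [h.1]

lemma star_mul_idem (s : S) : (star s * s) * (star s * s) = star s * s := by
  calc star s * s * (star s * s) = (star s * s * star s) * s := by
        simp only [mul_assoc]
    _ = star s * s := by rw [h.2.1]

lemma star_mul (s t : S) : star (s * t) = star t * star s := by
  refine (h.2.2 (s * t) (star t * star s) ?_ ?_).symm
  · calc s * t * (star t * star s) * (s * t)
        = s * ((t * star t) * (star s * s)) * t := by simp only [mul_assoc]
      _ = s * ((star s * s) * (t * star t)) * t := by
          rw [idem_comm h (mul_star_idem h t) (star_mul_idem h s)]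
      _ = (s * star s * s) * (t * star t * t) := by simp only [mul_assoc]
      _ = s * t := by rw [h.1, h.1]
  · calc star t * star s * (s * t) * (star t * star s)
        = star t * ((star s * s) * (t * star t)) * star s := by simp only [mul_assoc]
      _ = star t * ((t * star t) * (star s * s)) * star s := by
          rw [idem_comm h (mul_star_idem h t) (star_mul_idem h s)]
      _ = (star t * t * star t) * (star s * s * star s) := by simp only [mul_assoc]
      _ = star t * star s := by rw [h.2.1, h.2.1]

/-- `s*f ≤ s` for f idempotent, in the form needed by `Coherent`. -/
lemma mul_idem_le {f : S} (hf : f * f = f) (s : S) :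
    s * f = s * star (s * f) * (s * f) := by
  have hsf : star (s * f) = f * star s := by rw [star_mul h, idem_star h hf]
  rw [hsf]
  symm
  calc s * (f * star s) * (s * f)
      = s * (f * (star s * s)) * f := by simp only [mul_assoc]
    _ = s * ((star s * s) * f) * f := by rw [idem_comm h hf (star_mul_idem h s)]
    _ = (s * star s * s) * (f * f) := by simp only [mul_assoc]
    _ = s * f := by rw [h.1, hf]

/-- `f*s ≤ s` for f idempotent, in the form needed by `Coherent`. -/
lemma idem_mul_le {f : S} (hf : f * f = f) (s : S) :
    f * s = s * star (f * s) * (f * s) := by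
  have hsf : star (f * s) = star s * f := by rw [star_mul h, idem_star h hf]
  rw [hsf]
  symm
  calc s * (star s * f) * (f * s)
      = (s * star s) * ((f * f) * s) := by simp only [mul_assoc]
    _ = (s * star s) * (f * s) := by rw [hf]
    _ = ((s * star s) * f) * s := (mul_assoc _ f s).symm
    _ = (f * (s * star s)) * s := by rw [idem_comm h (mul_star_idem h s) hf]
    _ = f * (s * star s * s) := by simp only [mul_assoc]
    _ = f * s := by rw [h.1]

end

end AuxSG

/-- transform lemma for list sums -/
lemma listSum_map (φ : R →+ R) (h : S × R → S) (l : List (S × R)) :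
    ((l.map fun p => (h p, φ p.2)).map Prod.snd).sum = φ ((l.map Prod.snd).sum) := by
  induction l with
  | nil => simp
  | cons a t ih => simp only [List.map_cons, List.sum_cons, map_add, List.map_map] at *; rw [ih]

/-- The subgroup of elements admitting a `P`-graded representation. -/
def repGroup (𝓡 : S → AddSubgroup R) (P : S → Prop) : AddSubgroup R where
  carrier := {x | ∃ l : List (S × R),
    (∀ p ∈ l, P p.1 ∧ p.2 ∈ 𝓡 p.1) ∧ x = (l.map Prod.snd).sum}
  zero_mem' := ⟨[], by simp, by simp⟩
  add_mem' := by
    rintro a b ⟨l1, h1, rfl⟩ ⟨l2, h2, rfl⟩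
    exact ⟨l1 ++ l2, fun p hp => (List.mem_append.1 hp).elim (h1 p) (h2 p),
      by simp⟩
  neg_mem' := by
    rintro a ⟨l, hl, rfl⟩
    refine ⟨l.map fun p => (p.1, -p.2), ?_, ?_⟩
    · rintro p hp
      obtain ⟨q, hq, rfl⟩ := List.mem_map.1 hp
      exact ⟨(hl q hq).1, neg_mem (hl q hq).2⟩
    · exact (listSum_map (negAddMonoidHom) Prod.fst l).symm
  
lemma exists_rep_top (𝓡 : S → AddSubgroup R) (hsys : IsSystem 𝓡) (x : R) :
    ∃ l : List (S × R), (∀ p ∈ l, p.2 ∈ 𝓡 p.1) ∧ x = (l.map Prod.snd).sum := by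
  have hle : (⊤ : AddSubgroup R) ≤ repGroup 𝓡 (fun _ => True) := by
    rw [← hsys.1]
    exact iSup_le fun s y hy => ⟨[(s, y)], by simp [hy], by simp⟩
  obtain ⟨l, hl, he⟩ := hle (AddSubgroup.mem_top x)
  exact ⟨l, fun p hp => (hl p hp).2, he⟩

lemma exists_rep_sysZero (𝓡 : S → AddSubgroup R) {x : R} (hx : x ∈ sysZero 𝓡) :
    ∃ l : List (S × R), (∀ p ∈ l, p.1 * p.1 = p.1 ∧ p.2 ∈ 𝓡 p.1) ∧
      x = (l.map Prod.snd).sum := by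
  have hle : sysZero 𝓡 ≤ repGroup 𝓡 (fun e => e * e = e) :=
    iSup₂_le fun e he y hy => ⟨[(e, y)], by simpa using ⟨he, hy⟩, by simp⟩
  exact hle hx

lemma R_le_sysZero (𝓡 : S → AddSubgroup R) {e : S} (he : e * e = e) :
    𝓡 e ≤ sysZero 𝓡 := le_iSup₂ (f := fun e (_ : e ∈ {e : S | e * e = e}) => 𝓡 e) e he

lemma sumProd_le (𝓡 : S → AddSubgroup R) (hsys : IsSystem 𝓡) (s t : S) :
    sumProd (𝓡 s) (𝓡 t) ≤ 𝓡 (s * t) := by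
  refine (AddSubgroup.closure_le _).2 ?_
  rintro w hw
  rw [Set.mem_mul] at hw
  obtain ⟨a, ha, b, hb, rfl⟩ := hw
  exact hsys.2 s t a ha b hb

lemma mul_sumProd_eq_zero {𝓡 : S → AddSubgroup R} {x : R} {u v : S}
    (hz : ∀ a ∈ 𝓡 u, x * a = 0) {ε : R} (hε : ε ∈ sumProd (𝓡 u) (𝓡 v)) :
    x * ε = 0 := by
  have hle : sumProd (𝓡 u) (𝓡 v) ≤
      (⊥ : AddSubgroup R).comap (AddMonoidHom.mulLeft x) := by
    refine (AddSubgroup.closure_le _).2 ?_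
    rintro w hw
    rw [Set.mem_mul] at hw
    obtain ⟨a, ha, b, hb, rfl⟩ := hw
    refine SetLike.mem_coe.2 (AddSubgroup.mem_comap.2 ?_)
    rw [AddSubgroup.mem_bot]
    show x * (a * b) = 0
    rw [← mul_assoc, hz a ha, zero_mul]
  simpa using hle hε

lemma sysZero_comm {𝓡 : S → AddSubgroup R} (hmax : MaxCommZero 𝓡) {z w : R}
    (hz : z ∈ sysZero 𝓡) (hw : w ∈ sysZero 𝓡) : z * w = w * z := by
  have hz' : z ∈ {x : R | ∀ y ∈ sysZero 𝓡, x * y = y * x} := by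
    rw [hmax]; exact hz
  exact hz' w hw

lemma mem_sysZero_of_comm {𝓡 : S → AddSubgroup R} (hmax : MaxCommZero 𝓡) {z : R}
    (hz : ∀ y ∈ sysZero 𝓡, z * y = y * z) : z ∈ sysZero 𝓡 := by
  have : z ∈ {x : R | ∀ y ∈ sysZero 𝓡, x * y = y * x} := hz
  rw [hmax] at this; exact this


section
variable {star : S → S} (hstar : IsInverseStar star) {𝓡 : S → AddSubgroup R}
  (hsys : IsSystem 𝓡) (hcoh : Coherent star 𝓡)
include hstar hsys hcoh

/-- `R_s R_f ⊆ R_s` for idempotent `f`. -/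
lemma mul_idem_mem {f s : S} (hf : f * f = f) {x y : R}
    (hx : x ∈ 𝓡 s) (hy : y ∈ 𝓡 f) : x * y ∈ 𝓡 s :=
  hcoh (s * f) s (mul_idem_le hstar hf s) (hsys.2 s f x hx y hy)

/-- `R_f R_s ⊆ R_s` for idempotent `f`. -/
lemma idem_mul_mem {f s : S} (hf : f * f = f) {x y : R}
    (hx : x ∈ 𝓡 f) (hy : y ∈ 𝓡 s) : x * y ∈ 𝓡 s :=
  hcoh (f * s) s (idem_mul_le hstar hf s) (hsys.2 f s x hx y hy)

/-- `R₀ R_s ⊆ R_s`. -/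
lemma sysZero_mul_mem {s : S} {z x : R} (hz : z ∈ sysZero 𝓡) (hx : x ∈ 𝓡 s) :
    z * x ∈ 𝓡 s := by
  have hle : sysZero 𝓡 ≤ (𝓡 s).comap (AddMonoidHom.mulRight x) :=
    iSup₂_le fun e he w hw =>
      AddSubgroup.mem_comap.2 (idem_mul_mem hstar hsys hcoh he hw hx)
  exact AddSubgroup.mem_comap.1 (hle hz)

/-- `R_s R₀ ⊆ R_s`. -/
lemma mul_sysZero_mem {s : S} {z x : R} (hx : x ∈ 𝓡 s) (hz : z ∈ sysZero 𝓡) :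
    x * z ∈ 𝓡 s := by
  have hle : sysZero 𝓡 ≤ (𝓡 s).comap (AddMonoidHom.mulLeft x) :=
    iSup₂_le fun e he w hw =>
      AddSubgroup.mem_comap.2 (mul_idem_mem hstar hsys hcoh he hx hw)
  exact AddSubgroup.mem_comap.1 (hle hz)


omit hstar hsys hcoh in
lemma sum_map_A (u : S) (a : R) (t : List (S × R)) :
    ((t.map fun q => (q.1 * u, q.2 * a)).map Prod.snd).sum
      = (t.map Prod.snd).sum * a := by
  induction t with
  | nil => simp
  | cons x t ih => simp only [List.map_cons, List.sum_cons, ih, add_mul]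

omit hstar hsys hcoh in
lemma sum_map_B (c : R) (t : List (S × R)) :
    ((t.map fun q => (q.1, q.2 - q.2 * c)).map Prod.snd).sum
      = (t.map Prod.snd).sum - (t.map Prod.snd).sum * c := by
  induction t with
  | nil => simp
  | cons x t ih =>
    simp only [List.map_cons, List.sum_cons, ih, add_mul]
    abel

omit hstar hsys hcoh in
lemma sum_map_C (c : R) (t : List (S × R)) :
    ((t.map fun q => (q.1, q.2 - c * q.2)).map Prod.snd).sum
      = (t.map Prod.snd).sum - c * (t.map Prod.snd).sum := by
  induction t with
  | nil => simp
  | cons x t ih =>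
    simp only [List.map_cons, List.sum_cons, ih, mul_add]
    abel

omit hstar hsys hcoh in
lemma sum_map_D (u : S) (a z : R) (t : List (S × R)) :
    ((t.map fun q => (q.1 * u, z * (q.2 * a) - (q.2 * a) * z)).map Prod.snd).sum
      = z * ((t.map Prod.snd).sum * a) - ((t.map Prod.snd).sum * a) * z := by
  induction t with
  | nil => simp
  | cons x t ih =>
    simp only [List.map_cons, List.sum_cons, ih, add_mul, mul_add]
    abel

variable (hmax : MaxCommZero 𝓡)
  (heps : ∀ s : S, ∀ r ∈ 𝓡 s, ∃ ε ∈ sumProd (𝓡 s) (𝓡 (star s)),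
      ∃ ε' ∈ sumProd (𝓡 (star s)) (𝓡 s), ε * r = r ∧ r * ε' = r)

include hmax heps

/-- Stage 1: a nonzero ideal meets `R₀` nontrivially. -/
lemma stage1 {I : AddSubgroup R} (hI : IsRingIdeal I) (hne : I ≠ ⊥) :
    ∃ y : R, y ∈ I ∧ y ∈ sysZero 𝓡 ∧ y ≠ 0 := by
  classical
  obtain ⟨x0, hx0I, hx0⟩ : ∃ x ∈ I, x ≠ 0 := by
    by_contra hc
    push_neg at hc
    exact hne ((AddSubgroup.eq_bot_iff_forall I).2 hc)
  have hW : ∃ n : ℕ, ∃ (x : R) (l : List (S × R)), x ∈ I ∧ x ≠ 0 ∧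
      (∀ p ∈ l, p.2 ∈ 𝓡 p.1) ∧ l.length = n ∧ x = (l.map Prod.snd).sum := by
    obtain ⟨l, hl, he⟩ := exists_rep_top 𝓡 hsys x0
    exact ⟨l.length, x0, l, hx0I, hx0, hl, rfl, he⟩
  obtain ⟨x, l, hxI, hxne, hl, hlen, hsum⟩ := Nat.find_spec hW
  have hmin : ∀ (w : R) (l' : List (S × R)), w ∈ I →
      (∀ p ∈ l', p.2 ∈ 𝓡 p.1) → w = (l'.map Prod.snd).sum →
      l'.length < Nat.find hW → w = 0 := by
    intro w l' hwI hl' hws hlt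
    by_contra hw
    exact Nat.find_min hW hlt ⟨w, l', hwI, hw, hl', rfl, hws⟩
  cases l with
  | nil => exact absurd (by simpa using hsum) hxne
  | cons p t =>
    have hr1 : p.2 ∈ 𝓡 p.1 := hl p List.mem_cons_self
    obtain ⟨ε, hε, ε', hε', hεr, hrε'⟩ := heps p.1 p.2 hr1
    have hε'm : ε' ∈ 𝓡 (star p.1 * p.1) := sumProd_le 𝓡 hsys _ _ hε'
    have hidem : (star p.1 * p.1) * (star p.1 * p.1) = star p.1 * p.1 :=
      star_mul_idem hstar p.1
    have hxdec : x = p.2 + (t.map Prod.snd).sum := by simpa using hsum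
    have hltlen : t.length < Nat.find hW := by
      have : t.length + 1 = Nat.find hW := by simpa using hlen
      omega
    by_cases hcase : ∀ a ∈ 𝓡 (star p.1), x * a = 0
    · exfalso
      have h0 : x * ε' = 0 := mul_sumProd_eq_zero hcase hε'
      have hxs : x = ((t.map fun q => (q.1, q.2 - q.2 * ε')).map Prod.snd).sum := by
        rw [sum_map_B]
        have h1 : x * ε' = p.2 + (t.map Prod.snd).sum * ε' := by
          rw [hxdec, add_mul, hrε']
        calc x = x - x * ε' := by rw [h0, sub_zero]
          _ = (p.2 + (t.map Prod.snd).sum) - (p.2 + (t.map Prod.snd).sum * ε') := by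
              rw [← hxdec, ← h1]
          _ = (t.map Prod.snd).sum - (t.map Prod.snd).sum * ε' := by abel
      refine hxne (hmin x _ hxI ?_ hxs (by simpa using hltlen))
      intro q hq
      obtain ⟨q0, hq0, rfl⟩ := List.mem_map.1 hq
      exact sub_mem (hl q0 (List.mem_cons_of_mem p hq0))
        (mul_idem_mem hstar hsys hcoh hidem (hl q0 (List.mem_cons_of_mem p hq0)) hε'm)
    · push_neg at hcase
      obtain ⟨a, ha, hxa⟩ := hcase
      have hyI : x * a ∈ I := (hI a x hxI).2
      have hyfirst : p.2 * a ∈ 𝓡 (p.1 * star p.1) := hsys.2 _ _ _ hr1 _ ha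
      have hidem2 : (p.1 * star p.1) * (p.1 * star p.1) = p.1 * star p.1 :=
        mul_star_idem hstar p.1
      have hcomm : ∀ z ∈ sysZero 𝓡, (x * a) * z = z * (x * a) := by
        intro z hz
        have hc0 : z * (x * a) - (x * a) * z = 0 := by
          refine hmin _ (t.map fun q => (q.1 * star p.1, z * (q.2 * a) - (q.2 * a) * z))
            (sub_mem (hI z _ hyI).1 (hI z _ hyI).2) ?_ ?_ (by simpa using hltlen)
          · intro q hq
            obtain ⟨q0, hq0, rfl⟩ := List.mem_map.1 hq
            have hq0m : q0.2 * a ∈ 𝓡 (q0.1 * star p.1) :=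
              hsys.2 _ _ _ (hl q0 (List.mem_cons_of_mem p hq0)) _ ha
            exact sub_mem (sysZero_mul_mem hstar hsys hcoh hz hq0m)
              (mul_sysZero_mem hstar hsys hcoh hq0m hz)
          · rw [sum_map_D]
            have h1 : z * (p.2 * a) = (p.2 * a) * z :=
              sysZero_comm hmax hz (R_le_sysZero 𝓡 hidem2 hyfirst)
            calc z * (x * a) - (x * a) * z
                = z * (p.2 * a) + z * ((t.map Prod.snd).sum * a)
                  - ((p.2 * a) * z + ((t.map Prod.snd).sum * a) * z) := by
                  rw [hxdec, add_mul, mul_add, add_mul]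
              _ = z * ((t.map Prod.snd).sum * a)
                  - ((t.map Prod.snd).sum * a) * z := by rw [h1]; abel
        have := sub_eq_zero.1 hc0
        exact this.symm
      exact ⟨x * a, hyI, mem_sysZero_of_comm hmax hcomm, hxa⟩

/-- Stage 2: a nonzero element of `I ∩ R₀` yields a nonzero element of some `I ∩ R_e`. -/
lemma stage2 {I : AddSubgroup R} (hI : IsRingIdeal I)
    {y0 : R} (hy0I : y0 ∈ I) (hy0Z : y0 ∈ sysZero 𝓡) (hy0 : y0 ≠ 0) :
    ∃ (e : S) (x : R), x ∈ I ∧ x ∈ 𝓡 e ∧ x ≠ 0 := by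
  classical
  have hW : ∃ n : ℕ, ∃ (y : R) (l : List (S × R)), y ∈ I ∧ y ≠ 0 ∧
      (∀ p ∈ l, p.1 * p.1 = p.1 ∧ p.2 ∈ 𝓡 p.1) ∧ l.length = n ∧
      y = (l.map Prod.snd).sum := by
    obtain ⟨l, hl, he⟩ := exists_rep_sysZero 𝓡 hy0Z
    exact ⟨l.length, y0, l, hy0I, hy0, hl, rfl, he⟩
  obtain ⟨y, l, hyI, hyne, hl, hlen, hsum⟩ := Nat.find_spec hW
  have hmin : ∀ (w : R) (l' : List (S × R)), w ∈ I →
      (∀ p ∈ l', p.1 * p.1 = p.1 ∧ p.2 ∈ 𝓡 p.1) → w = (l'.map Prod.snd).sum →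
      l'.length < Nat.find hW → w = 0 := by
    intro w l' hwI hl' hws hlt
    by_contra hw
    exact Nat.find_min hW hlt ⟨w, l', hwI, hw, hl', rfl, hws⟩
  cases l with
  | nil => exact absurd (by simpa using hsum) hyne
  | cons p t =>
    obtain ⟨he1, hr1⟩ := hl p List.mem_cons_self
    obtain ⟨ε, hε, ε', hε', hεr, hrε'⟩ := heps p.1 p.2 hr1
    have hεm : ε ∈ 𝓡 p.1 := by
      have := sumProd_le 𝓡 hsys p.1 (star p.1) hε
      rwa [idem_star hstar he1, he1] at this
    have hyZ : y ∈ sysZero 𝓡 := by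
      rw [hsum]
      refine AddSubgroup.list_sum_mem _ ?_
      intro w hw
      obtain ⟨q, hq, rfl⟩ := List.mem_map.1 hw
      exact R_le_sysZero 𝓡 (hl q hq).1 (hl q hq).2
    have hydec : y = p.2 + (t.map Prod.snd).sum := by simpa using hsum
    have hltlen : t.length < Nat.find hW := by
      have : t.length + 1 = Nat.find hW := by simpa using hlen
      omega
    have hy' : y - ε * y = 0 := by
      refine hmin _ (t.map fun q => (q.1, q.2 - ε * q.2))
        (sub_mem hyI (hI ε y hyI).1) ?_ ?_ (by simpa using hltlen)
      · intro q hq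
        obtain ⟨q0, hq0, rfl⟩ := List.mem_map.1 hq
        refine ⟨(hl q0 (List.mem_cons_of_mem p hq0)).1,
          sub_mem (hl q0 (List.mem_cons_of_mem p hq0)).2 ?_⟩
        exact idem_mul_mem hstar hsys hcoh he1 hεm (hl q0 (List.mem_cons_of_mem p hq0)).2
      · rw [sum_map_C]
        calc y - ε * y
            = (p.2 + (t.map Prod.snd).sum) - (ε * p.2 + ε * (t.map Prod.snd).sum) := by
              rw [← hydec, ← mul_add, ← hydec]
          _ = (t.map Prod.snd).sum - ε * (t.map Prod.snd).sum := by rw [hεr]; abel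
    have hyε : y = ε * y := by rwa [sub_eq_zero] at hy'
    refine ⟨p.1, y, hyI, ?_, hyne⟩
    rw [hyε]
    exact mul_sysZero_mem hstar hsys hcoh hεm hyZ



theorem stmt10' : RingSimple R ↔ SystemSimple 𝓡 := by
  constructor
  · intro hR I hIs
    exact hR I hIs.1
  · intro hS I hI
    by_cases hb : I = ⊥
    · exact Or.inl hb
    refine Or.inr ?_
    obtain ⟨y, hyI, hyZ, hyne⟩ := stage1 hstar hsys hcoh hmax heps hI hb
    obtain ⟨e, x, hxI, hxR, hxne⟩ := stage2 hstar hsys hcoh hmax heps hI hyI hyZ hyne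
    set J : AddSubgroup R := ⨆ s : S, (I ⊓ 𝓡 s) with hJdef
    have hJle : J ≤ I := iSup_le fun s => inf_le_left
    have hsub : ∀ s : S, I ⊓ 𝓡 s ≤ J := fun s => le_iSup (fun s => I ⊓ 𝓡 s) s
    have hJideal : IsRingIdeal J := by
      intro r w hw
      have key : ∀ s : S, ∀ w' ∈ I ⊓ 𝓡 s, ∀ r' : R, r' * w' ∈ J ∧ w' * r' ∈ J := by
        intro s w' hw' r'
        have htop : (⊤ : AddSubgroup R) ≤
            (J.comap (AddMonoidHom.mulRight w')) ⊓ (J.comap (AddMonoidHom.mulLeft w')) := by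
          rw [← hsys.1]
          refine iSup_le fun t r'' hr'' => ?_
          constructor
          · exact AddSubgroup.mem_comap.2
              (hsub (t * s) ⟨(hI r'' w' hw'.1).1, hsys.2 t s r'' hr'' w' hw'.2⟩)
          · exact AddSubgroup.mem_comap.2
              (hsub (s * t) ⟨(hI r'' w' hw'.1).2, hsys.2 s t w' hw'.2 r'' hr''⟩)
        have := htop (AddSubgroup.mem_top r')
        exact ⟨AddSubgroup.mem_comap.1 this.1, AddSubgroup.mem_comap.1 this.2⟩
      have hwK : J ≤ (J.comap (AddMonoidHom.mulLeft r)) ⊓ (J.comap (AddMonoidHom.mulRight r)) := by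
        refine iSup_le fun s w' hw' => ?_
        exact ⟨AddSubgroup.mem_comap.2 (key s w' hw' r).1,
          AddSubgroup.mem_comap.2 (key s w' hw' r).2⟩
      exact ⟨AddSubgroup.mem_comap.1 (hwK hw).1, AddSubgroup.mem_comap.1 (hwK hw).2⟩
    have hJsys : IsSystemIdeal 𝓡 J := by
      refine ⟨hJideal, le_antisymm ?_ (iSup_le fun s => inf_le_left)⟩
      exact iSup_le fun s => le_iSup_of_le s (le_inf (hsub s) inf_le_right)
    have hxJ : x ∈ J := hsub e ⟨hxI, hxR⟩
    rcases hS J hJsys with h | h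
    · exact absurd (by rw [h] at hxJ; simpa using hxJ) hxne
    · exact le_antisymm le_top (h ▸ hJle)

end

/-- Let `S` be an inverse semigroup and `R` a coherent,
s-unital epsilon-strong system over `S`. If `R₀` is a maximal commutative subring
of `R`, then `R` is simple iff `R` is system simple. -/
theorem stmt10 {S R : Type*} [Semigroup S] [NonUnitalRing R]
    (star : S → S) (hstar : IsInverseStar star)
    (𝓡 : S → AddSubgroup R) (hsys : IsSystem 𝓡)
    (hcoh : Coherent star 𝓡)
    (heps : ∀ s : S, ∀ r ∈ 𝓡 s, ∃ ε ∈ sumProd (𝓡 s) (𝓡 (star s)),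
      ∃ ε' ∈ sumProd (𝓡 (star s)) (𝓡 s), ε * r = r ∧ r * ε' = r)
    (hmax : MaxCommZero 𝓡) :
    RingSimple R ↔ SystemSimple 𝓡 :=
  stmt10' hstar hsys hcoh hmax heps

end PaperSys
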